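/- Let S be a nonempty compact subset of [0,1]^d and let Q* be a d-quasi-copula. Define Q̲^{S,Q*}(u) = max{0, Σᵢ uᵢ − d + 1, max_{x∈S}(Q*(x) − Σᵢ (xᵢ − uᵢ)⁺)} and Q̄^{S,Q*}(u) = min{u₁,…,u_d, min_{x∈S}(Q*(x) + Σᵢ (uᵢ − xᵢ)⁺)} for u ∈ [0,1]^d, where t⁺ = max{t,0}. Then Q̲^{S,Q*} and Q̄^{S,Q*} are d-quasi-copulas, and Q̲^{S,Q*}(x) = Q*(x) = Q̄^{S,Q*}(x) for all x ∈ S. -/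

import Mathlib

open MeasureTheory Filter

noncomputable section

/-- The closed unit cube in `ℝ^d`. -/
def unitCube (d : ℕ) : Set (Fin d → ℝ) := {u | ∀ i, u i ∈ Set.Icc (0 : ℝ) 1}

/-- A `d`-quasi-copula (conditions imposed on the unit cube). -/
def IsQuasiCopula (d : ℕ) (Q : (Fin d → ℝ) → ℝ) : Prop :=
  (∀ u ∈ unitCube d, Q u ∈ Set.Icc (0 : ℝ) 1) ∧
  (∀ u ∈ unitCube d, (∃ i, u i = 0) → Q u = 0) ∧
  (∀ (i : Fin d), ∀ t ∈ Set.Icc (0 : ℝ) 1, Q (fun j => if j = i then t else 1) = t) ∧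
  (∀ u ∈ unitCube d, ∀ v ∈ unitCube d, (∀ i, u i ≤ v i) → Q u ≤ Q v) ∧
  (∀ u ∈ unitCube d, ∀ v ∈ unitCube d, |Q u - Q v| ≤ ∑ i, |u i - v i|)

/-- The `C`-volume of the box `(a, b]`, via the alternating sum over the vertices. -/
def boxVolume (d : ℕ) (C : (Fin d → ℝ) → ℝ) (a b : Fin d → ℝ) : ℝ :=
  ∑ ε : Fin d → Bool,
    (-1 : ℝ) ^ (Finset.univ.filter fun i => ε i).card * C (fun i => if ε i then a i else b i)

/-- A `d`-copula: a `d`-quasi-copula that is `d`-increasing. -/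
def IsCopula (d : ℕ) (C : (Fin d → ℝ) → ℝ) : Prop :=
  IsQuasiCopula d C ∧
  ∀ a ∈ unitCube d, ∀ b ∈ unitCube d, (∀ i, a i ≤ b i) → 0 ≤ boxVolume d C a b

/-- The survival function `Ĉ(u) = V_C([u₁,1] × ⋯ × [u_d,1])` of a `d`-copula `C`. -/
def survivalFn (d : ℕ) (C : (Fin d → ℝ) → ℝ) (u : Fin d → ℝ) : ℝ :=
  ∑ ε : Fin d → Bool,
    (-1 : ℝ) ^ (Finset.univ.filter fun i => ε i).card * C (fun i => if ε i then u i else 1)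

/-- The lower Fréchet–Hoeffding bound `W_d`. -/
def FHlower (d : ℕ) (u : Fin d → ℝ) : ℝ := max 0 ((∑ i, u i) - (d : ℝ) + 1)

/-- The upper Fréchet–Hoeffding bound `M_d`. -/
def FHupper {d : ℕ} (hd : 0 < d) (u : Fin d → ℝ) : ℝ :=
  Finset.univ.inf' ⟨⟨0, hd⟩, Finset.mem_univ _⟩ u

/-- The one-point improved upper Fréchet–Hoeffding bound `Q̄^{u,α}`. -/
def Qup {d : ℕ} (hd : 0 < d) (u : Fin d → ℝ) (α : ℝ) (v : Fin d → ℝ) : ℝ :=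
  min (FHupper hd v) (α + ∑ i, max (v i - u i) 0)

/-- The one-point improved lower Fréchet–Hoeffding bound `Q̲^{u,α}`. -/
def Qlow (d : ℕ) (u : Fin d → ℝ) (α : ℝ) (v : Fin d → ℝ) : ℝ :=
  max (FHlower d v) (α - ∑ i, max (u i - v i) 0)

/-- The Kolmogorov–Smirnov distance on the unit cube. -/
def DKS (d : ℕ) (Q Q' : (Fin d → ℝ) → ℝ) : ℝ :=
  sSup ((fun v => |Q v - Q' v|) '' unitCube d)

/-- Auxiliary: one-sided Lipschitz property of quasi-copulas. -/
lemma qc_one_sided {d : ℕ} {Q : (Fin d → ℝ) → ℝ} (hQ : IsQuasiCopula d Q)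
    {u v : Fin d → ℝ} (hu : u ∈ unitCube d) (hv : v ∈ unitCube d) :
    Q u - Q v ≤ ∑ i, max (u i - v i) 0 := by
  obtain ⟨hr, hz, hm, hmono, hlip⟩ := hQ
  have hwc : (fun i => max (u i) (v i)) ∈ unitCube d :=
    fun i => ⟨le_max_of_le_left (hu i).1, max_le (hu i).2 (hv i).2⟩
  have h1 : Q u ≤ Q (fun i => max (u i) (v i)) :=
    hmono u hu _ hwc fun i => le_max_left _ _
  have h2 : Q (fun i => max (u i) (v i)) - Q v ≤ ∑ i, |max (u i) (v i) - v i| :=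
    le_trans (le_abs_self _) (hlip _ hwc v hv)
  have h3 : ∀ i, |max (u i) (v i) - v i| = max (u i - v i) 0 := by
    intro i
    rcases le_total (u i) (v i) with h | h
    · rw [max_eq_right h, sub_self, abs_zero, max_eq_right (by linarith)]
    · rw [max_eq_left h, max_eq_left (by linarith), abs_of_nonneg (by linarith)]
  calc Q u - Q v ≤ Q (fun i => max (u i) (v i)) - Q v := by linarith
    _ ≤ ∑ i, |max (u i) (v i) - v i| := h2
    _ = ∑ i, max (u i - v i) 0 := by simp [h3]

/-- Auxiliary: `Q(1,…,1) = 1`. -/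
lemma qc_one {d : ℕ} (hd : 0 < d) {Q : (Fin d → ℝ) → ℝ} (hQ : IsQuasiCopula d Q) :
    Q (fun _ => 1) = 1 := by
  have := hQ.2.2.1 ⟨0, hd⟩ 1 ⟨zero_le_one, le_rfl⟩
  simpa using this

lemma one_mem_cube {d : ℕ} : (fun _ => (1 : ℝ)) ∈ unitCube d :=
  fun _ => ⟨zero_le_one, le_rfl⟩

/-- Auxiliary: lower Fréchet–Hoeffding bound below a quasi-copula. -/
lemma qc_FHlow_le {d : ℕ} (hd : 0 < d) {Q : (Fin d → ℝ) → ℝ} (hQ : IsQuasiCopula d Q)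
    {u : Fin d → ℝ} (hu : u ∈ unitCube d) : (∑ i, u i) - (d : ℝ) + 1 ≤ Q u := by
  have h := qc_one_sided hQ (one_mem_cube (d := d)) hu
  rw [qc_one hd hQ] at h
  have h2 : ∀ i, max ((1 : ℝ) - u i) 0 = 1 - u i := fun i => max_eq_left (by linarith [(hu i).2])
  have h3 : ∑ i, max ((1 : ℝ) - u i) 0 = (d : ℝ) - ∑ i, u i := by
    simp only [h2, Finset.sum_sub_distrib, Finset.sum_const, Finset.card_univ,
      Fintype.card_fin, nsmul_eq_mul, mul_one]
  linarith [h]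

/-- Auxiliary: quasi-copula is below each coordinate. -/
lemma qc_le_coord {d : ℕ} {Q : (Fin d → ℝ) → ℝ} (hQ : IsQuasiCopula d Q)
    {u : Fin d → ℝ} (hu : u ∈ unitCube d) (i : Fin d) : Q u ≤ u i := by
  have hcube : (fun j => if j = i then u i else 1) ∈ unitCube d := by
    intro j; by_cases h : j = i <;> simp [h, (hu i).1, (hu i).2]
  have h1 : Q u ≤ Q (fun j => if j = i then u i else 1) := by
    refine hQ.2.2.2.1 u hu _ hcube fun j => ?_
    by_cases h : j = i <;> simp [h, (hu j).2]
  have h2 := hQ.2.2.1 i (u i) ⟨(hu i).1, (hu i).2⟩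
  linarith

/-- Auxiliary: Lipschitz bound for a single positive-part term. -/
lemma pos_part_lip (a u v : ℝ) : |max (a - u) 0 - max (a - v) 0| ≤ |u - v| := by
  have h := abs_max_sub_max_le_max (a - u) 0 (a - v) 0
  have he : a - u - (a - v) = v - u := by ring
  rw [he, sub_self, abs_zero, max_eq_left (abs_nonneg (v-u))] at h
  rw [abs_sub_comm u v]
  exact h

lemma pos_part_lip' (a u v : ℝ) : |max (u - a) 0 - max (v - a) 0| ≤ |u - v| := by
  have h := abs_max_sub_max_le_max (u - a) 0 (v - a) 0
  have he : u - a - (v - a) = u - v := by ring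
  rw [he, sub_self, abs_zero, max_eq_left (abs_nonneg (u-v))] at h
  exact h

/-- the improved Fréchet–Hoeffding bounds for prescription on a compact set `S`
are themselves quasi-copulas and coincide with `Q*` on `S`. -/
theorem improved_FH_bounds_quasi_copulas {d : ℕ} (hd : 0 < d)
    (S : Set (Fin d → ℝ)) (hSne : S.Nonempty) (hScomp : IsCompact S)
    (hScube : S ⊆ unitCube d)
    (Qstar : (Fin d → ℝ) → ℝ) (hQstar : IsQuasiCopula d Qstar) :
    IsQuasiCopula d (fun u => max (max 0 ((∑ i, u i) - (d : ℝ) + 1))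
        (sSup ((fun x => Qstar x - ∑ i, max (x i - u i) 0) '' S))) ∧
    IsQuasiCopula d (fun u => min (FHupper hd u)
        (sInf ((fun x => Qstar x + ∑ i, max (u i - x i) 0) '' S))) ∧
    (∀ x ∈ S, max (max 0 ((∑ i, x i) - (d : ℝ) + 1))
        (sSup ((fun y => Qstar y - ∑ i, max (y i - x i) 0) '' S)) = Qstar x) ∧
    (∀ x ∈ S, min (FHupper hd x)
        (sInf ((fun y => Qstar y + ∑ i, max (x i - y i) 0) '' S)) = Qstar x) := by
  have hr := hQstar.1
  have hz := hQstar.2.1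
  have hm := hQstar.2.2.1
  have hmono := hQstar.2.2.2.1
  -- basic facts about the image sets
  have pen_nonneg : ∀ (x u : Fin d → ℝ), (0:ℝ) ≤ ∑ i, max (x i - u i) 0 :=
    fun x u => Finset.sum_nonneg fun i _ => le_max_right _ _
  have hAne : ∀ u : Fin d → ℝ,
      ((fun x => Qstar x - ∑ i, max (x i - u i) 0) '' S).Nonempty := fun u => hSne.image _
  have hBne : ∀ u : Fin d → ℝ,
      ((fun x => Qstar x + ∑ i, max (u i - x i) 0) '' S).Nonempty := fun u => hSne.image _
  have hAle : ∀ u ∈ unitCube d,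
      ∀ a ∈ ((fun x => Qstar x - ∑ i, max (x i - u i) 0) '' S), a ≤ Qstar u := by
    rintro u hu a ⟨x, hxS, rfl⟩
    have := qc_one_sided hQstar (hScube hxS) hu
    dsimp only
    linarith
  have hBge : ∀ u ∈ unitCube d,
      ∀ b ∈ ((fun x => Qstar x + ∑ i, max (u i - x i) 0) '' S), Qstar u ≤ b := by
    rintro u hu b ⟨x, hxS, rfl⟩
    have := qc_one_sided hQstar hu (hScube hxS)
    dsimp only
    linarith
  have hAbdd : ∀ u : Fin d → ℝ,
      BddAbove ((fun x => Qstar x - ∑ i, max (x i - u i) 0) '' S) := by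
    intro u
    refine ⟨1, ?_⟩
    rintro a ⟨x, hxS, rfl⟩
    have h1 := (hr x (hScube hxS)).2
    have := pen_nonneg x u
    dsimp only
    linarith
  have hBbdd : ∀ u : Fin d → ℝ,
      BddBelow ((fun x => Qstar x + ∑ i, max (u i - x i) 0) '' S) := by
    intro u
    refine ⟨0, ?_⟩
    rintro b ⟨x, hxS, rfl⟩
    have h1 := (hr x (hScube hxS)).1
    have := pen_nonneg u x
    dsimp only
    linarith
  have hgle : ∀ u ∈ unitCube d,
      sSup ((fun x => Qstar x - ∑ i, max (x i - u i) 0) '' S) ≤ Qstar u :=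
    fun u hu => csSup_le (hAne u) (hAle u hu)
  have hhge : ∀ u ∈ unitCube d,
      Qstar u ≤ sInf ((fun x => Qstar x + ∑ i, max (u i - x i) 0) '' S) :=
    fun u hu => le_csInf (hBne u) (hBge u hu)
  have hhnonneg : ∀ u : Fin d → ℝ,
      (0:ℝ) ≤ sInf ((fun x => Qstar x + ∑ i, max (u i - x i) 0) '' S) := by
    intro u
    refine le_csInf (hBne u) ?_
    rintro b ⟨x, hxS, rfl⟩
    have h1 := (hr x (hScube hxS)).1
    have := pen_nonneg u x
    dsimp only
    linarith
  -- Lipschitz facts for penalties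
  have pen_lipA : ∀ x u v : Fin d → ℝ,
      (∑ i, max (x i - v i) 0) ≤ (∑ i, max (x i - u i) 0) + ∑ i, |u i - v i| := by
    intro x u v
    rw [← Finset.sum_add_distrib]
    refine Finset.sum_le_sum fun i _ => ?_
    have := abs_le.mp (pos_part_lip (x i) (u i) (v i))
    linarith [this.1]
  have pen_lipB : ∀ x u v : Fin d → ℝ,
      (∑ i, max (v i - x i) 0) ≤ (∑ i, max (u i - x i) 0) + ∑ i, |u i - v i| := by
    intro x u v
    rw [← Finset.sum_add_distrib]
    refine Finset.sum_le_sum fun i _ => ?_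
    have := abs_le.mp (pos_part_lip' (x i) (u i) (v i))
    linarith [this.1]
  -- one-sided Lipschitz for sSup part
  have hgLip : ∀ u v : Fin d → ℝ,
      sSup ((fun x => Qstar x - ∑ i, max (x i - u i) 0) '' S) ≤
      sSup ((fun x => Qstar x - ∑ i, max (x i - v i) 0) '' S) + ∑ i, |u i - v i| := by
    intro u v
    refine csSup_le (hAne u) ?_
    rintro a ⟨x, hxS, rfl⟩
    have h1 : Qstar x - ∑ i, max (x i - u i) 0 ≤
        (Qstar x - ∑ i, max (x i - v i) 0) + ∑ i, |u i - v i| := by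
      have := pen_lipA x u v
      linarith
    refine le_trans h1 (add_le_add (le_csSup (hAbdd v) ⟨x, hxS, rfl⟩) le_rfl)
  have hhLip : ∀ u v : Fin d → ℝ,
      sInf ((fun x => Qstar x + ∑ i, max (u i - x i) 0) '' S) ≤
      sInf ((fun x => Qstar x + ∑ i, max (v i - x i) 0) '' S) + ∑ i, |u i - v i| := by
    intro u v
    rw [← sub_le_iff_le_add]
    refine le_csInf (hBne v) ?_
    rintro b ⟨x, hxS, rfl⟩
    have h1 : sInf ((fun x => Qstar x + ∑ i, max (u i - x i) 0) '' S) ≤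
        Qstar x + ∑ i, max (u i - x i) 0 := csInf_le (hBbdd u) ⟨x, hxS, rfl⟩
    have h2 := pen_lipB x v u
    have habs : ∑ i, |v i - u i| = ∑ i, |u i - v i| := by
      refine Finset.sum_congr rfl fun i _ => abs_sub_comm _ _
    dsimp only
    linarith [h2, habs]
  -- sum over margin point
  have margin_sum : ∀ (i : Fin d) (t : ℝ),
      ∑ j, (if j = i then t else (1:ℝ)) = (d : ℝ) - 1 + t := by
    intro i t
    have : ∀ j, (if j = i then t else (1:ℝ)) = (if j = i then t - 1 else 0) + 1 := by
      intro j; by_cases h : j = i <;> simp [h]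
    simp only [this, Finset.sum_add_distrib, Finset.sum_ite_eq', Finset.mem_univ, if_true,
      Finset.sum_const, Finset.card_univ, Fintype.card_fin, nsmul_eq_mul, mul_one]
    ring
  have margin_cube : ∀ (i : Fin d), ∀ t ∈ Set.Icc (0:ℝ) 1,
      (fun j => if j = i then t else (1:ℝ)) ∈ unitCube d := by
    intro i t ht j
    by_cases h : j = i <;> simp [h, ht.1, ht.2]
  have sum_le_d : ∀ u ∈ unitCube d, ∑ i, u i ≤ (d : ℝ) := by
    intro u hu
    calc ∑ i, u i ≤ ∑ _i : Fin d, (1:ℝ) := Finset.sum_le_sum fun i _ => (hu i).2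
      _ = (d : ℝ) := by simp
  -- monotonicity of the parts
  have hgmono : ∀ u v : Fin d → ℝ, (∀ i, u i ≤ v i) →
      sSup ((fun x => Qstar x - ∑ i, max (x i - u i) 0) '' S) ≤
      sSup ((fun x => Qstar x - ∑ i, max (x i - v i) 0) '' S) := by
    intro u v huv
    refine csSup_le (hAne u) ?_
    rintro a ⟨x, hxS, rfl⟩
    have h1 : Qstar x - ∑ i, max (x i - u i) 0 ≤ Qstar x - ∑ i, max (x i - v i) 0 := by
      have : ∑ i, max (x i - v i) 0 ≤ ∑ i, max (x i - u i) 0 :=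
        Finset.sum_le_sum fun i _ => max_le_max (by linarith [huv i]) le_rfl
      linarith
    exact le_trans h1 (le_csSup (hAbdd v) ⟨x, hxS, rfl⟩)
  have hhmono : ∀ u v : Fin d → ℝ, (∀ i, u i ≤ v i) →
      sInf ((fun x => Qstar x + ∑ i, max (u i - x i) 0) '' S) ≤
      sInf ((fun x => Qstar x + ∑ i, max (v i - x i) 0) '' S) := by
    intro u v huv
    refine le_csInf (hBne v) ?_
    rintro b ⟨x, hxS, rfl⟩
    have h1 : sInf ((fun x => Qstar x + ∑ i, max (u i - x i) 0) '' S) ≤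
        Qstar x + ∑ i, max (u i - x i) 0 := csInf_le (hBbdd u) ⟨x, hxS, rfl⟩
    have h2 : ∑ i, max (u i - x i) 0 ≤ ∑ i, max (v i - x i) 0 :=
      Finset.sum_le_sum fun i _ => max_le_max (by linarith [huv i]) le_rfl
    dsimp only
    linarith
  refine ⟨?_, ?_, ?_, ?_⟩
  · -- lower bound is a quasi-copula
    refine ⟨?_, ?_, ?_, ?_, ?_⟩
    · -- range
      intro u hu
      constructor
      · exact le_trans (le_max_left 0 _) (le_max_left _ _)
      · refine max_le (max_le zero_le_one ?_) ?_
        · linarith [sum_le_d u hu]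
        · exact le_trans (hgle u hu) (hr u hu).2
    · -- grounded
      rintro u hu ⟨i, hi⟩
      have hQ0 : Qstar u = 0 := hz u hu ⟨i, hi⟩
      have h1 : (∑ j, u j) - (d : ℝ) + 1 ≤ 0 := by
        have := qc_FHlow_le hd hQstar hu
        linarith [this, hQ0]
      have h2 : sSup ((fun x => Qstar x - ∑ j, max (x j - u j) 0) '' S) ≤ 0 :=
        hQ0 ▸ hgle u hu
      dsimp only
      rw [max_eq_left h1, max_eq_left h2]
    · -- margins
      intro i t ht
      have hu := margin_cube i t ht
      have hs : (∑ j, (if j = i then t else (1:ℝ))) - (d:ℝ) + 1 = t := by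
        rw [margin_sum]; ring
      have hQm := hm i t ht
      have hg : sSup ((fun x => Qstar x - ∑ j,
          max (x j - (if j = i then t else (1:ℝ)))  0) '' S) ≤ t := by
        have := hgle _ hu
        rw [hQm] at this
        exact this
      dsimp only
      rw [hs, max_eq_right ht.1]
      exact max_eq_left hg
    · -- monotone
      intro u hu v hv huv
      refine max_le_max (max_le_max le_rfl ?_) (hgmono u v huv)
      have := Finset.sum_le_sum (fun i (_ : i ∈ Finset.univ) => huv i)
      linarith
    · -- Lipschitz
      intro u hu v hv
      refine le_trans (abs_max_sub_max_le_max _ _ _ _) (max_le ?_ ?_)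
      · refine le_trans (abs_max_sub_max_le_max _ _ _ _) (max_le (by simp [Finset.sum_nonneg]) ?_)
        have : (∑ i, u i) - (d:ℝ) + 1 - ((∑ i, v i) - (d:ℝ) + 1) = ∑ i, (u i - v i) := by
          rw [Finset.sum_sub_distrib]; ring
        rw [this]
        exact Finset.abs_sum_le_sum_abs _ _
      · rw [abs_sub_le_iff]
        constructor
        · linarith [hgLip u v]
        · have := hgLip v u
          have habs : ∑ i, |v i - u i| = ∑ i, |u i - v i| :=
            Finset.sum_congr rfl fun i _ => abs_sub_comm _ _
          linarith [this, habs]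
  · -- upper bound is a quasi-copula
    have hFHle : ∀ u : Fin d → ℝ, ∀ i, FHupper hd u ≤ u i := by
      intro u i
      exact Finset.inf'_le _ (Finset.mem_univ i)
    have hFHge : ∀ (u : Fin d → ℝ) (c : ℝ), (∀ i, c ≤ u i) → c ≤ FHupper hd u := by
      intro u c hc
      exact Finset.le_inf' _ _ fun i _ => hc i
    refine ⟨?_, ?_, ?_, ?_, ?_⟩
    · -- range
      intro u hu
      constructor
      · exact le_min (hFHge u 0 fun i => (hu i).1) (hhnonneg u)
      · exact le_trans (min_le_left _ _) (le_trans (hFHle u ⟨0, hd⟩) (hu ⟨0, hd⟩).2)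
    · -- grounded
      rintro u hu ⟨i, hi⟩
      have h1 : min (FHupper hd u)
          (sInf ((fun x => Qstar x + ∑ j, max (u j - x j) 0) '' S)) ≤ 0 :=
        le_trans (min_le_left _ _) (by rw [← hi]; exact hFHle u i)
      have h2 : (0:ℝ) ≤ min (FHupper hd u)
          (sInf ((fun x => Qstar x + ∑ j, max (u j - x j) 0) '' S)) :=
        le_min (hFHge u 0 fun j => (hu j).1) (hhnonneg u)
      linarith
    · -- margins
      intro i t ht
      have hu := margin_cube i t ht
      have hFH : FHupper hd (fun j => if j = i then t else (1:ℝ)) = t := by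
        refine le_antisymm ?_ ?_
        · have := hFHle (fun j => if j = i then t else (1:ℝ)) i
          simpa using this
        · refine hFHge _ t fun j => ?_
          by_cases h : j = i <;> simp [h, ht.2]
      have hQm := hm i t ht
      have hh : t ≤ sInf ((fun x => Qstar x + ∑ j,
          max ((if j = i then t else (1:ℝ)) - x j) 0) '' S) := by
        have := hhge _ hu
        rw [hQm] at this
        exact this
      dsimp only
      rw [hFH]
      exact min_eq_left hh
    · -- monotone
      intro u hu v hv huv
      refine min_le_min ?_ (hhmono u v huv)
      exact hFHge v (FHupper hd u) fun i => le_trans (hFHle u i) (huv i)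
    · -- Lipschitz
      intro u hu v hv
      refine le_trans (abs_min_sub_min_le_max _ _ _ _) (max_le ?_ ?_)
      · rw [abs_sub_le_iff]
        have key : ∀ a b : Fin d → ℝ, FHupper hd a ≤ FHupper hd b + ∑ i, |a i - b i| := by
          intro a b
          obtain ⟨j, _, hj⟩ := Finset.exists_mem_eq_inf'
            (⟨(⟨0, hd⟩ : Fin d), Finset.mem_univ _⟩ : (Finset.univ : Finset (Fin d)).Nonempty) b
          have h1 : FHupper hd a ≤ a j := hFHle a j
          have h2 : a j - b j ≤ |a j - b j| := le_abs_self _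
          have h3 : |a j - b j| ≤ ∑ i, |a i - b i| :=
            Finset.single_le_sum (f := fun i => |a i - b i|) (fun i _ => abs_nonneg _)
              (Finset.mem_univ j)
          have h4 : FHupper hd b = b j := hj
          linarith
        constructor
        · linarith [key u v]
        · have := key v u
          have habs : ∑ i, |v i - u i| = ∑ i, |u i - v i| :=
            Finset.sum_congr rfl fun i _ => abs_sub_comm _ _
          linarith [this, habs]
      · rw [abs_sub_le_iff]
        constructor
        · linarith [hhLip u v]
        · have := hhLip v u
          have habs : ∑ i, |v i - u i| = ∑ i, |u i - v i| :=
            Finset.sum_congr rfl fun i _ => abs_sub_comm _ _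
          linarith [this, habs]
  · -- coincidence for the lower bound
    intro x hxS
    have hx := hScube hxS
    have hmem : Qstar x ∈ ((fun y => Qstar y - ∑ i, max (y i - x i) 0) '' S) := by
      refine ⟨x, hxS, ?_⟩
      have : ∑ i, max (x i - x i) 0 = 0 := by simp
      simp [this]
    have hsup : sSup ((fun y => Qstar y - ∑ i, max (y i - x i) 0) '' S) = Qstar x :=
      le_antisymm (hgle x hx) (le_csSup (hAbdd x) hmem)
    rw [hsup]
    refine max_eq_right (max_le (hr x hx).1 ?_)
    linarith [qc_FHlow_le hd hQstar hx]
  · -- coincidence for the upper bound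
    intro x hxS
    have hx := hScube hxS
    have hmem : Qstar x ∈ ((fun y => Qstar y + ∑ i, max (x i - y i) 0) '' S) := by
      refine ⟨x, hxS, ?_⟩
      have : ∑ i, max (x i - x i) 0 = 0 := by simp
      simp [this]
    have hinf : sInf ((fun y => Qstar y + ∑ i, max (x i - y i) 0) '' S) = Qstar x :=
      le_antisymm (csInf_le (hBbdd x) hmem) (hhge x hx)
    rw [hinf]
    refine min_eq_right ?_
    exact Finset.le_inf' _ _ fun i _ => qc_le_coord hQstar hx i
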